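/- arXiv:quant-ph/0009090 — 2 statements merged into one kernel-verified Lean document; each statement's English description precedes it below -/
import Mathlib

section
/- Every separable state Q on ℂ^N satisfies Tr(Q E_ψ) ≤ |v_{j₀}|², where |v_{j₀}| = max_j |v_j|. Consequently, every state Q with Tr(Q E_ψ) > |v_{j₀}|² is entangled. -/
open Matrix BigOperators ComplexOrder

noncomputable section

/-- The Frobenius inner product `⟨A, B⟩ = Tr(Aᴴ B)`. -/
def frobInner {m : Type*} [Fintype m] (A B : Matrix m m ℂ) : ℂ :=
  (Aᴴ * B).trace

/-- The Frobenius norm associated to the Frobenius inner product. -/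
def frobNorm {m : Type*} [Fintype m] (A : Matrix m m ℂ) : ℝ :=
  Real.sqrt (frobInner A A).re

/-- A state (density matrix): a positive semidefinite (Hermitian) matrix of trace one. -/
def IsState {m : Type*} [Fintype m] (M : Matrix m m ℂ) : Prop :=
  M.PosSemidef ∧ M.trace = 1

/-- A pure state: a rank-one orthogonal projection, i.e. a Hermitian idempotent of trace one. -/
def IsPureState {m : Type*} [Fintype m] (M : Matrix m m ℂ) : Prop :=
  M.IsHermitian ∧ M * M = M ∧ M.trace = 1

/-- The Kronecker product of the matrices `A α`, realized on the tuple basis of the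
tensor product `ℂ^{n 0} ⊗ ⋯ ⊗ ℂ^{n (p-1)} ≃ ℂ^N`, `N = ∏ α, n α`. -/
def prodMat {p : ℕ} {n : Fin p → ℕ} (A : ∀ α, Matrix (Fin (n α)) (Fin (n α)) ℂ) :
    Matrix (∀ α, Fin (n α)) (∀ α, Fin (n α)) ℂ :=
  fun j k => ∏ α, A α (j α) (k α)

/-- A pure product state: a Kronecker product of pure states on the factors. -/
def IsPureProductState {p : ℕ} {n : Fin p → ℕ}
    (M : Matrix (∀ α, Fin (n α)) (∀ α, Fin (n α)) ℂ) : Prop :=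
  ∃ A : ∀ α, Matrix (Fin (n α)) (Fin (n α)) ℂ,
    (∀ α, IsPureState (A α)) ∧ M = prodMat A

/-- A (fully) separable state: a finite convex combination of pure product states. -/
def IsSeparableState {p : ℕ} {n : Fin p → ℕ}
    (M : Matrix (∀ α, Fin (n α)) (∀ α, Fin (n α)) ℂ) : Prop :=
  ∃ (k : ℕ) (c : Fin k → ℝ) (P : Fin k → Matrix (∀ α, Fin (n α)) (∀ α, Fin (n α)) ℂ),
    (∀ i, 0 ≤ c i) ∧ (∑ i, c i) = 1 ∧ (∀ i, IsPureProductState (P i)) ∧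
      M = ∑ i, (c i : ℂ) • P i

/-- The vector `ψ = ∑ j, v j • (e j ⊗ ⋯ ⊗ e j)`, where `e j` is the `j`-th standard basis
vector of each factor (embedded via `n 0 ≤ n α`). -/
def psiVec {p : ℕ} {n : Fin (p + 2) → ℕ} (hn : Monotone n) (v : Fin (n 0) → ℂ) :
    (∀ α, Fin (n α)) → ℂ :=
  fun x => ∑ j : Fin (n 0), v j *
    ∏ α, (if x α = Fin.castLE (hn (Fin.zero_le α)) j then (1 : ℂ) else 0)

/-- The pure state `E_ψ = |ψ⟩⟨ψ|`. -/
def Epsi {p : ℕ} {n : Fin (p + 2) → ℕ} (hn : Monotone n) (v : Fin (n 0) → ℂ) :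
    Matrix (∀ α, Fin (n α)) (∀ α, Fin (n α)) ℂ :=
  fun x y => psiVec hn v x * star (psiVec hn v y)

/-! Auxiliary lemmas -/

lemma pure_diag_eq {m : Type*} [Fintype m] {A : Matrix m m ℂ}
    (h1 : A.IsHermitian) (h2 : A * A = A) (i : m) :
    (A i i).re = ∑ l, ‖A l i‖ ^ 2 := by
  have hA : Aᴴ * A = A := by rw [h1]; exact h2
  have hx : A i i = ∑ l, (starRingEnd ℂ) (A l i) * A l i := by
    conv_lhs => rw [← hA]
    simp [Matrix.mul_apply, Matrix.conjTranspose_apply]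
  rw [hx, Complex.re_sum]
  congr 1; funext l
  rw [← Complex.normSq_eq_conj_mul_self, Complex.ofReal_re,
    Complex.normSq_eq_norm_sq]

lemma pure_entry {m : Type*} [Fintype m] {A : Matrix m m ℂ}
    (h1 : A.IsHermitian) (h2 : A * A = A) (i j : m) :
    ‖A i j‖ ≤ Real.sqrt (A i i).re * Real.sqrt (A j j).re := by
  have hA : Aᴴ * A = A := by rw [h1]; exact h2
  have hx : ∀ i j : m, A i j = ∑ l, (starRingEnd ℂ) (A l i) * A l j := by
    intro i j
    conv_lhs => rw [← hA]
    simp [Matrix.mul_apply, Matrix.conjTranspose_apply]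
  set x : EuclideanSpace ℂ m := WithLp.toLp 2 (fun l => A l i) with hxdef
  set y : EuclideanSpace ℂ m := WithLp.toLp 2 (fun l => A l j) with hydef
  have hinner : A i j = @inner ℂ _ _ x y := by
    rw [hx i j, PiLp.inner_apply]
    simp [RCLike.inner_apply, hxdef, hydef, mul_comm]
  have hnx : ‖x‖ = Real.sqrt ((A i i).re) := by
    rw [EuclideanSpace.norm_eq, pure_diag_eq h1 h2]
  have hny : ‖y‖ = Real.sqrt ((A j j).re) := by
    rw [EuclideanSpace.norm_eq, pure_diag_eq h1 h2]
  calc ‖A i j‖ = ‖@inner ℂ _ _ x y‖ := by rw [hinner]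
    _ ≤ ‖x‖ * ‖y‖ := norm_inner_le_norm x y
    _ = _ := by rw [hnx, hny]

lemma pure_diag_nonneg {m : Type*} [Fintype m] {A : Matrix m m ℂ}
    (h1 : A.IsHermitian) (h2 : A * A = A) (i : m) : 0 ≤ (A i i).re := by
  rw [pure_diag_eq h1 h2]
  exact Finset.sum_nonneg fun l _ => by positivity

lemma pure_diag_sum {m : Type*} [Fintype m] {A : Matrix m m ℂ}
    (h3 : A.trace = 1) : ∑ i, (A i i).re = 1 := by
  have : (A.trace).re = 1 := by rw [h3]; simp
  rw [← this, Matrix.trace, Complex.re_sum]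
  rfl

lemma prod_ite_eq_ite {p : ℕ} {n : Fin p → ℕ} (x g : ∀ α, Fin (n α)) :
    ∏ α, (if x α = g α then (1:ℂ) else 0) = if x = g then 1 else 0 := by
  by_cases h : x = g
  · subst h; simp
  · rw [if_neg h]
    obtain ⟨α, hα⟩ := Function.ne_iff.mp h
    exact Finset.prod_eq_zero (Finset.mem_univ α) (if_neg hα)

/-- The embedding `j ↦ (castLE j, …, castLE j)`. -/
def diagEmb {p : ℕ} {n : Fin (p + 2) → ℕ} (hn : Monotone n) (j : Fin (n 0)) :
    ∀ α, Fin (n α) := fun α => Fin.castLE (hn (Fin.zero_le α)) j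

lemma sum_psi_mul {p : ℕ} {n : Fin (p + 2) → ℕ} (hn : Monotone n) (v : Fin (n 0) → ℂ)
    (f : (∀ α, Fin (n α)) → ℂ) :
    ∑ x, psiVec hn v x * f x = ∑ j, v j * f (diagEmb hn j) := by
  unfold psiVec
  have key : ∀ x : ∀ α, Fin (n α), ∀ j : Fin (n 0),
      (∏ α, (if x α = Fin.castLE (hn (Fin.zero_le α)) j then (1:ℂ) else 0))
        = if x = diagEmb hn j then 1 else 0 := by
    intro x j
    exact prod_ite_eq_ite x (diagEmb hn j)
  simp_rw [key, Finset.sum_mul, mul_assoc, ite_mul, one_mul, zero_mul]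
  rw [Finset.sum_comm]
  refine Finset.sum_congr rfl fun j _ => ?_
  rw [← Finset.mul_sum, Finset.sum_ite_eq' Finset.univ (diagEmb hn j) f,
    if_pos (Finset.mem_univ _)]

lemma trace_mul_Epsi {p : ℕ} {n : Fin (p + 2) → ℕ} (hn : Monotone n) (v : Fin (n 0) → ℂ)
    (Q : Matrix (∀ α, Fin (n α)) (∀ α, Fin (n α)) ℂ) :
    (Q * Epsi hn v).trace
      = ∑ k, ∑ j, star (v k) * (v j * Q (diagEmb hn k) (diagEmb hn j)) := by
  have h0 : (Q * Epsi hn v).trace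
      = ∑ x, star (psiVec hn v x) * ∑ y, psiVec hn v y * Q x y := by
    rw [Matrix.trace]
    simp only [Matrix.diag, Matrix.mul_apply, Epsi]
    refine Finset.sum_congr rfl fun x _ => ?_
    rw [Finset.mul_sum]
    refine Finset.sum_congr rfl fun y _ => ?_
    ring
  rw [h0]
  have h1 : ∀ x, (∑ y, psiVec hn v y * Q x y) = ∑ j, v j * Q x (diagEmb hn j) :=
    fun x => sum_psi_mul hn v (fun y => Q x y)
  simp_rw [h1]
  set g : (∀ α, Fin (n α)) → ℂ := fun x => ∑ j, v j * Q x (diagEmb hn j) with hg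
  have e1 : ∑ x, star (psiVec hn v x) * g x = star (∑ x, psiVec hn v x * star (g x)) := by
    rw [star_sum]
    refine Finset.sum_congr rfl fun x _ => ?_
    rw [StarMul.star_mul, star_star]
    ring
  rw [e1, sum_psi_mul hn v (fun x => star (g x)), star_sum]
  refine Finset.sum_congr rfl fun k _ => ?_
  rw [StarMul.star_mul, star_star]
  show (∑ j, v j * Q (diagEmb hn k) (diagEmb hn j)) * star (v k) = _
  rw [Finset.sum_mul]
  exact Finset.sum_congr rfl fun j _ => by ring



lemma pure_prod_bound {p : ℕ} {n : Fin (p + 2) → ℕ} (hn : Monotone n) (v : Fin (n 0) → ℂ)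
    (j₀ : Fin (n 0)) (hj₀ : ∀ j, ‖v j‖ ≤ ‖v j₀‖)
    {P : Matrix (∀ α, Fin (n α)) (∀ α, Fin (n α)) ℂ} (hP : IsPureProductState P) :
    (P * Epsi hn v).trace.re ≤ ‖v j₀‖ ^ 2 ∧ (P * Epsi hn v).trace.im = 0 := by
  obtain ⟨A, hA, rfl⟩ := hP
  rw [trace_mul_Epsi]
  set T := ∑ k, ∑ j, star (v k) * (v j * prodMat A (diagEmb hn k) (diagEmb hn j)) with hT
  have hherm : ∀ x y, star (prodMat A x y) = prodMat A y x := by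
    intro x y
    unfold prodMat
    rw [star_prod]
    exact Finset.prod_congr rfl fun α _ => (hA α).1.apply _ _
  have hstar : star T = T := by
    rw [hT, star_sum]
    simp_rw [star_sum, StarMul.star_mul, star_star, hherm]
    rw [Finset.sum_comm]
    exact Finset.sum_congr rfl fun k _ => Finset.sum_congr rfl fun j _ => by ring
  have him : T.im = 0 := by
    have h := congrArg Complex.im hstar
    simp only [Complex.star_def, Complex.conj_im] at h
    linarith
  refine ⟨?_, him⟩
  -- diagonal quantities
  have hb0 : ∀ (α) (i : Fin (n α)), 0 ≤ (A α i i).re :=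
    fun α i => pure_diag_nonneg (hA α).1 (hA α).2.1 i
  have hb1 : ∀ (α) (i : Fin (n α)), (A α i i).re ≤ 1 := by
    intro α i
    rw [← pure_diag_sum (hA α).2.2]
    exact Finset.single_le_sum (fun l _ => hb0 α l) (Finset.mem_univ i)
  set s : Fin (n 0) → ℝ := fun j => ∏ α, Real.sqrt ((A α (diagEmb hn j α) (diagEmb hn j α)).re)
    with hs
  have hs0 : ∀ j, 0 ≤ s j := fun j => Finset.prod_nonneg fun α _ => Real.sqrt_nonneg _
  have hPb : ∀ k j, ‖prodMat A (diagEmb hn k) (diagEmb hn j)‖ ≤ s k * s j := by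
    intro k j
    show ‖∏ α, A α (diagEmb hn k α) (diagEmb hn j α)‖ ≤ _
    rw [norm_prod]
    calc ∏ α, ‖A α (diagEmb hn k α) (diagEmb hn j α)‖
        ≤ ∏ α, (Real.sqrt ((A α (diagEmb hn k α) (diagEmb hn k α)).re) *
            Real.sqrt ((A α (diagEmb hn j α) (diagEmb hn j α)).re)) :=
          Finset.prod_le_prod (fun α _ => norm_nonneg _)
            (fun α _ => pure_entry (hA α).1 (hA α).2.1 _ _)
      _ = s k * s j := by rw [Finset.prod_mul_distrib]
  -- sum of s is at most 1
  have hsub : ∀ α : Fin (p + 2), ∑ j, (A α (diagEmb hn j α) (diagEmb hn j α)).re ≤ 1 := by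
    intro α
    have hinj : ∀ a ∈ Finset.univ, ∀ b ∈ Finset.univ,
        (fun j : Fin (n 0) => diagEmb hn j α) a = (fun j => diagEmb hn j α) b → a = b :=
      fun a _ b _ h => Fin.castLE_injective _ h
    rw [← pure_diag_sum (hA α).2.2]
    calc ∑ j, (A α (diagEmb hn j α) (diagEmb hn j α)).re
        = ∑ i ∈ Finset.univ.image (fun j : Fin (n 0) => diagEmb hn j α), (A α i i).re :=
          (Finset.sum_image (f := fun i => (A α i i).re) hinj).symm
      _ ≤ ∑ i, (A α i i).re :=
          Finset.sum_le_sum_of_subset_of_nonneg (Finset.subset_univ _)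
            (fun i _ _ => hb0 α i)
  have h01 : (0 : Fin (p + 2)) ≠ 1 := by
    intro h
    have := congrArg Fin.val h
    simp at this
  have hsle : ∀ j, s j ≤ ((A 0 (diagEmb hn j 0) (diagEmb hn j 0)).re
      + (A 1 (diagEmb hn j 1) (diagEmb hn j 1)).re) / 2 := by
    intro j
    set f : Fin (p + 2) → ℝ :=
      fun α => Real.sqrt ((A α (diagEmb hn j α) (diagEmb hn j α)).re) with hf
    have hstep1 : s j = (f 0 * f 1) * ∏ α ∈ ({0, 1} : Finset (Fin (p + 2)))ᶜ, f α := by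
      have hsj : s j = ∏ α, f α := rfl
      rw [hsj, ← Finset.prod_mul_prod_compl ({0, 1} : Finset (Fin (p + 2))) f,
        Finset.prod_pair h01]
    have hstep3 : ∏ α ∈ ({0, 1} : Finset (Fin (p + 2)))ᶜ, f α ≤ 1 :=
      Finset.prod_le_one (fun α _ => Real.sqrt_nonneg _)
        (fun α _ => Real.sqrt_le_one.mpr (hb1 α _))
    have hf0 : 0 ≤ f 0 * f 1 := mul_nonneg (Real.sqrt_nonneg _) (Real.sqrt_nonneg _)
    have hstep2 : (f 0 * f 1) ≤ ((A 0 (diagEmb hn j 0) (diagEmb hn j 0)).re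
        + (A 1 (diagEmb hn j 1) (diagEmb hn j 1)).re) / 2 := by
      have e0 := Real.sq_sqrt (hb0 0 (diagEmb hn j 0))
      have e1 := Real.sq_sqrt (hb0 1 (diagEmb hn j 1))
      nlinarith [sq_nonneg (f 0 - f 1), Real.sqrt_nonneg ((A 0 (diagEmb hn j 0) (diagEmb hn j 0)).re),
        Real.sqrt_nonneg ((A 1 (diagEmb hn j 1) (diagEmb hn j 1)).re)]
    calc s j = (f 0 * f 1) * ∏ α ∈ ({0, 1} : Finset (Fin (p + 2)))ᶜ, f α := hstep1
      _ ≤ (f 0 * f 1) * 1 := mul_le_mul_of_nonneg_left hstep3 hf0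
      _ = f 0 * f 1 := mul_one _
      _ ≤ _ := hstep2
  have hssum : ∑ j, s j ≤ 1 := by
    calc ∑ j, s j ≤ ∑ j, ((A 0 (diagEmb hn j 0) (diagEmb hn j 0)).re
          + (A 1 (diagEmb hn j 1) (diagEmb hn j 1)).re) / 2 :=
        Finset.sum_le_sum fun j _ => hsle j
      _ = ((∑ j, (A 0 (diagEmb hn j 0) (diagEmb hn j 0)).re)
          + ∑ j, (A 1 (diagEmb hn j 1) (diagEmb hn j 1)).re) / 2 := by
        rw [← Finset.sum_add_distrib, ← Finset.sum_div]
      _ ≤ (1 + 1) / 2 := by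
        have := hsub 0; have := hsub 1; linarith
      _ = 1 := by norm_num
  -- norm bound
  have hTnorm : ‖T‖ ≤ ∑ k, ∑ j, ‖v k‖ *
      (‖v j‖ * ‖prodMat A (diagEmb hn k) (diagEmb hn j)‖) := by
    refine (norm_sum_le _ _).trans (Finset.sum_le_sum fun k _ => ?_)
    refine (norm_sum_le _ _).trans (Finset.sum_le_sum fun j _ => ?_)
    rw [norm_mul, norm_mul, norm_star]
  have hterm : ∀ k j, ‖v k‖ * (‖v j‖ * ‖prodMat A (diagEmb hn k) (diagEmb hn j)‖)
      ≤ (‖v j₀‖ * s k) * (‖v j₀‖ * s j) := by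
    intro k j
    calc ‖v k‖ * (‖v j‖ * ‖prodMat A (diagEmb hn k) (diagEmb hn j)‖)
        ≤ ‖v j₀‖ * (‖v j₀‖ * (s k * s j)) := by
          refine mul_le_mul (hj₀ k) ?_ (by positivity) (norm_nonneg _)
          exact mul_le_mul (hj₀ j) (hPb k j) (norm_nonneg _) (norm_nonneg _)
      _ = (‖v j₀‖ * s k) * (‖v j₀‖ * s j) := by ring
  have hfin : ∑ k, ∑ j, (‖v j₀‖ * s k) * (‖v j₀‖ * s j) ≤ ‖v j₀‖ ^ 2 := by
    rw [← Finset.sum_mul_sum]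
    have h5 : ∑ k, ‖v j₀‖ * s k ≤ ‖v j₀‖ := by
      rw [← Finset.mul_sum]
      calc ‖v j₀‖ * ∑ j, s j ≤ ‖v j₀‖ * 1 :=
          mul_le_mul_of_nonneg_left hssum (norm_nonneg _)
        _ = ‖v j₀‖ := mul_one _
    have h6 : 0 ≤ ∑ k, ‖v j₀‖ * s k :=
      Finset.sum_nonneg fun k _ => mul_nonneg (norm_nonneg _) (hs0 k)
    calc (∑ k, ‖v j₀‖ * s k) * (∑ j, ‖v j₀‖ * s j) ≤ ‖v j₀‖ * ‖v j₀‖ :=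
        mul_le_mul h5 h5 h6 (norm_nonneg _)
      _ = ‖v j₀‖ ^ 2 := (sq _).symm
  calc T.re ≤ ‖T‖ := by exact Complex.re_le_norm T
    _ ≤ ∑ k, ∑ j, ‖v k‖ * (‖v j‖ * ‖prodMat A (diagEmb hn k) (diagEmb hn j)‖) := hTnorm
    _ ≤ ∑ k, ∑ j, (‖v j₀‖ * s k) * (‖v j₀‖ * s j) :=
        Finset.sum_le_sum fun k _ => Finset.sum_le_sum fun j _ => hterm k j
    _ ≤ ‖v j₀‖ ^ 2 := hfin

/-- Every separable state `Q` satisfies `Tr(Q E_ψ) ≤ |v j₀|²`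
(inequality in the complex order, so in particular the trace is real); consequently,
every state `Q` with `Tr(Q E_ψ) > |v j₀|²` is entangled (i.e. not separable). -/
theorem separable_trace_le_and_entangled {p : ℕ} {n : Fin (p + 2) → ℕ}
    (hn : Monotone n) (hn₁ : 2 ≤ n 0)
    (v : Fin (n 0) → ℂ) (hv : ∑ j, ‖v j‖ ^ 2 = 1)
    (j₀ : Fin (n 0)) (hj₀ : ∀ j, ‖v j‖ ≤ ‖v j₀‖) :
    (∀ Q : Matrix (∀ α, Fin (n α)) (∀ α, Fin (n α)) ℂ, IsSeparableState Q →
        (Q * Epsi hn v).trace ≤ ((‖v j₀‖ ^ 2 : ℝ) : ℂ)) ∧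
      (∀ Q : Matrix (∀ α, Fin (n α)) (∀ α, Fin (n α)) ℂ, IsState Q →
        ((‖v j₀‖ ^ 2 : ℝ) : ℂ) < (Q * Epsi hn v).trace → ¬ IsSeparableState Q) := by
  have part1 : ∀ Q : Matrix (∀ α, Fin (n α)) (∀ α, Fin (n α)) ℂ, IsSeparableState Q →
      (Q * Epsi hn v).trace ≤ ((‖v j₀‖ ^ 2 : ℝ) : ℂ) := by
    rintro Q ⟨k, c, P, hc0, hc1, hPp, rfl⟩
    have hlin : ((∑ i, (c i : ℂ) • P i) * Epsi hn v).trace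
        = ∑ i, (c i : ℂ) * (P i * Epsi hn v).trace := by
      rw [Finset.sum_mul, Matrix.trace_sum]
      exact Finset.sum_congr rfl fun i _ => by
        rw [Matrix.smul_mul, Matrix.trace_smul, smul_eq_mul]
    rw [hlin, Complex.le_def]
    constructor
    · rw [Complex.re_sum]
      have hterm : ∀ i, ((c i : ℂ) * (P i * Epsi hn v).trace).re ≤ c i * ‖v j₀‖ ^ 2 := by
        intro i
        rw [Complex.re_ofReal_mul]
        exact mul_le_mul_of_nonneg_left (pure_prod_bound hn v j₀ hj₀ (hPp i)).1 (hc0 i)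
      calc ∑ i, ((c i : ℂ) * (P i * Epsi hn v).trace).re ≤ ∑ i, c i * ‖v j₀‖ ^ 2 :=
          Finset.sum_le_sum fun i _ => hterm i
        _ = (∑ i, c i) * ‖v j₀‖ ^ 2 := (Finset.sum_mul _ _ _).symm
        _ = ‖v j₀‖ ^ 2 := by rw [hc1, one_mul]
        _ = ((‖v j₀‖ ^ 2 : ℝ) : ℂ).re := by rw [Complex.ofReal_re]
    · rw [Complex.im_sum]
      have hterm : ∀ i, ((c i : ℂ) * (P i * Epsi hn v).trace).im = 0 := by
        intro i
        have : (c i : ℂ).im = 0 := by simp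
        rw [Complex.mul_im, this, (pure_prod_bound hn v j₀ hj₀ (hPp i)).2]
        ring
      rw [Complex.ofReal_im]
      simp [hterm]
  refine ⟨part1, fun Q _ hlt hsep => ?_⟩
  exact lt_irrefl _ (hlt.trans_le (part1 Q hsep))
end
end

section
/- Suppose in addition |v_j| < 1 for every j, and let |v_{j₀}| = max_j |v_j|. Then every state Q on ℂ^N with Frobenius distance ‖Q − E_ψ‖ < (1 − |v_{j₀}|²)·√(N/(N−1)) is entangled. -/
open Matrix BigOperators ComplexOrder

noncomputable section

/-! ### Auxiliary lemmas -/

lemma frobInner_eq_sum {m : Type*} [Fintype m] (A B : Matrix m m ℂ) :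
    frobInner A B = ∑ x, ∑ y, star (A x y) * B x y := by
  simp only [frobInner, Matrix.trace, Matrix.diag, Matrix.mul_apply,
    Matrix.conjTranspose_apply]
  rw [Finset.sum_comm]

lemma star_mul_self_re (z : ℂ) : (star z * z).re = ‖z‖ ^ 2 := by
  rw [show (star z) = (starRingEnd ℂ) z from rfl, ← Complex.normSq_eq_conj_mul_self,
    Complex.ofReal_re, Complex.sq_norm]

lemma frobNorm_sq {m : Type*} [Fintype m] (A : Matrix m m ℂ) :
    (frobInner A A).re = ∑ x, ∑ y, ‖A x y‖ ^ 2 := by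
  rw [frobInner_eq_sum, Complex.re_sum]
  refine Finset.sum_congr rfl fun x _ => ?_
  rw [Complex.re_sum]
  exact Finset.sum_congr rfl fun y _ => star_mul_self_re _

lemma frob_cs {m : Type*} [Fintype m] (A B : Matrix m m ℂ) :
    ‖frobInner A B‖ ≤ frobNorm A * frobNorm B := by
  classical
  let f : EuclideanSpace ℂ (m × m) := WithLp.toLp 2 (fun q : m × m => A q.1 q.2)
  let g : EuclideanSpace ℂ (m × m) := WithLp.toLp 2 (fun q : m × m => B q.1 q.2)
  have h1 : frobInner A B = @inner ℂ _ _ f g := by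
    rw [frobInner_eq_sum, PiLp.inner_apply]
    simp only [RCLike.inner_apply]
    rw [← Finset.sum_product']
    exact Finset.sum_congr rfl fun q _ => mul_comm _ _
  have hn : ∀ (C : Matrix m m ℂ) (h : EuclideanSpace ℂ (m × m)),
      (∀ q : m × m, h q = C q.1 q.2) → frobNorm C = ‖h‖ := by
    intro C h hh
    rw [frobNorm, EuclideanSpace.norm_eq]
    congr 1
    rw [frobNorm_sq, ← Finset.sum_product']
    refine (Finset.sum_congr rfl fun q _ => ?_).symm
    rw [hh q]
  rw [h1, hn A f fun q => rfl, hn B g fun q => rfl]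
  exact norm_inner_le_norm f g

open scoped MatrixOrder in
theorem Matrix.posSemidef_iff_eq_transpose_mul_self {n : Type*} [Fintype n] {A : Matrix n n ℂ} :
    A.PosSemidef ↔ ∃ B : Matrix n n ℂ, A = Bᴴ * B := by
  classical
  refine ⟨fun hA => ?_, fun ⟨B, hB⟩ => hB ▸ posSemidef_conjTranspose_mul_self B⟩
  obtain ⟨X, hX, -, hXA⟩ := sub_zero A ▸ CFC.exists_sqrt_of_isSelfAdjoint_of_quasispectrumRestricts
    hA.isHermitian (QuasispectrumRestricts.nnreal_of_nonneg hA.nonneg)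
  rw [sub_zero] at hXA
  exact ⟨X, by rw [← hXA, ← Matrix.star_eq_conjTranspose, hX.star_eq]⟩

lemma psd_diag_nonneg {k : Type*} [Fintype k] [DecidableEq k] {A : Matrix k k ℂ}
    (hA : A.PosSemidef) (i : k) : 0 ≤ (A i i).re := by
  obtain ⟨B, rfl⟩ := Matrix.posSemidef_iff_eq_transpose_mul_self.mp hA
  simp only [Matrix.mul_apply, Matrix.conjTranspose_apply]
  rw [Complex.re_sum]
  refine Finset.sum_nonneg fun t _ => ?_
  rw [star_mul_self_re]
  positivity

lemma psd_entry_bound {k : Type*} [Fintype k] [DecidableEq k] {A : Matrix k k ℂ}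
    (hA : A.PosSemidef) (i j : k) :
    ‖A i j‖ ≤ Real.sqrt (A i i).re * Real.sqrt (A j j).re := by
  obtain ⟨B, rfl⟩ := Matrix.posSemidef_iff_eq_transpose_mul_self.mp hA
  let col : k → EuclideanSpace ℂ k := fun t => WithLp.toLp 2 (fun s => B s t)
  have h1 : (Bᴴ * B) i j = @inner ℂ _ _ (col i) (col j) := by
    rw [Matrix.mul_apply, PiLp.inner_apply]
    simp [RCLike.inner_apply, Matrix.conjTranspose_apply, col]
    exact Finset.sum_congr rfl fun s _ => mul_comm _ _
  have h2 : ∀ t : k, ((Bᴴ * B) t t).re = ‖col t‖ ^ 2 := by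
    intro t
    rw [EuclideanSpace.norm_eq, Real.sq_sqrt (by positivity)]
    simp only [Matrix.mul_apply, Matrix.conjTranspose_apply]
    rw [Complex.re_sum]
    exact Finset.sum_congr rfl fun s _ => star_mul_self_re _
  rw [h1, h2 i, h2 j, Real.sqrt_sq (norm_nonneg _), Real.sqrt_sq (norm_nonneg _)]
  exact norm_inner_le_norm (col i) (col j)

section Psi

variable {p : ℕ} {n : Fin (p + 2) → ℕ}

/-- The constant tuple `(j, j, …, j)` (with castings). -/
def jt (hn : Monotone n) (j : Fin (n 0)) : ∀ α, Fin (n α) :=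
  fun α => Fin.castLE (hn (Fin.zero_le α)) j

lemma jt_inj (hn : Monotone n) : Function.Injective (jt hn) :=
  fun _ _ h => Fin.castLE_injective _ (congrFun h 0)

lemma prod_ite_eq_jt (hn : Monotone n) (x : ∀ α, Fin (n α)) (j : Fin (n 0)) :
    (∏ α, (if x α = Fin.castLE (hn (Fin.zero_le α)) j then (1 : ℂ) else 0))
      = if x = jt hn j then 1 else 0 := by
  by_cases h : x = jt hn j
  · subst h; simp [jt]
  · rw [if_neg h]
    obtain ⟨α, hα⟩ : ∃ α, x α ≠ jt hn j α := by
      by_contra hc; push_neg at hc; exact h (funext hc)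
    exact Finset.prod_eq_zero (Finset.mem_univ α) (if_neg hα)

lemma psiVec_eq (hn : Monotone n) (v : Fin (n 0) → ℂ) (x : ∀ α, Fin (n α)) :
    psiVec hn v x = ∑ j, v j * (if x = jt hn j then 1 else 0) :=
  Finset.sum_congr rfl fun j _ => by
    rw [show (∏ α, (if x α = Fin.castLE (hn (Fin.zero_le α)) j then (1 : ℂ) else 0))
      = if x = jt hn j then 1 else 0 from prod_ite_eq_jt hn x j]

lemma psiVec_jt (hn : Monotone n) (v : Fin (n 0) → ℂ) (j : Fin (n 0)) :
    psiVec hn v (jt hn j) = v j := by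
  rw [psiVec_eq]
  rw [Finset.sum_eq_single j (fun b _ hb => by
    rw [if_neg (fun hc => hb ((jt_inj hn hc).symm)), mul_zero]) (by simp)]
  simp

lemma sum_psi (hn : Monotone n) (v : Fin (n 0) → ℂ) (f : (∀ α, Fin (n α)) → ℂ) :
    ∑ x, psiVec hn v x * f x = ∑ j, v j * f (jt hn j) := by
  simp only [psiVec_eq, Finset.sum_mul]
  rw [Finset.sum_comm]
  refine Finset.sum_congr rfl fun j _ => ?_
  simp [mul_ite, ite_mul, Finset.sum_ite_eq']

lemma star_psiVec (hn : Monotone n) (v : Fin (n 0) → ℂ) (x : ∀ α, Fin (n α)) :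
    star (psiVec hn v x) = psiVec hn (fun j => star (v j)) x := by
  rw [psiVec_eq, psiVec_eq, star_sum]
  refine Finset.sum_congr rfl fun j _ => ?_
  rw [star_mul']
  split <;> simp

lemma sum_psi_star (hn : Monotone n) (v : Fin (n 0) → ℂ) (g : (∀ α, Fin (n α)) → ℂ) :
    ∑ x, star (psiVec hn v x) * g x = ∑ j, star (v j) * g (jt hn j) := by
  simp only [star_psiVec]
  exact sum_psi hn (fun j => star (v j)) g

end Psi

lemma pureState_posSemidef {k : Type*} [Fintype k] {A : Matrix k k ℂ}
    (h : IsPureState A) : A.PosSemidef :=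
  Matrix.posSemidef_iff_eq_transpose_mul_self.mpr ⟨A, by rw [h.1]; exact h.2.1.symm⟩

lemma pureState_diag_sum {k : Type*} [Fintype k] [DecidableEq k] {A : Matrix k k ℂ}
    (h : IsPureState A) : ∑ i, (A i i).re = 1 := by
  have h1 : (A.trace).re = 1 := by rw [h.2.2]; simp
  rw [Matrix.trace] at h1
  rw [← h1, Complex.re_sum]
  rfl

lemma pureState_diag_le_one {k : Type*} [Fintype k] [DecidableEq k] {A : Matrix k k ℂ}
    (h : IsPureState A) (i : k) : (A i i).re ≤ 1 := by
  rw [← pureState_diag_sum h]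
  exact Finset.single_le_sum
    (fun j _ => psd_diag_nonneg (pureState_posSemidef h) j) (Finset.mem_univ i)

/-- The key estimate: the overlap of `E_ψ` with any pure product state is at most
`max_j |v j|²`. -/
lemma overlap_bound {p : ℕ} {n : Fin (p + 2) → ℕ} (hn : Monotone n) (v : Fin (n 0) → ℂ)
    (j₀ : Fin (n 0)) (hj₀ : ∀ j, ‖v j‖ ≤ ‖v j₀‖)
    (A : ∀ α, Matrix (Fin (n α)) (Fin (n α)) ℂ) (hA : ∀ α, IsPureState (A α)) :
    (frobInner (Epsi hn v) (prodMat A)).re ≤ ‖v j₀‖ ^ 2 := by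
  have hEP : frobInner (Epsi hn v) (prodMat A)
      = ∑ j, star (v j) * ∑ k, v k * prodMat A (jt hn j) (jt hn k) := by
    rw [frobInner_eq_sum]
    have hterm : ∀ x, (∑ y, star (Epsi hn v x y) * prodMat A x y)
        = star (psiVec hn v x) * ∑ k, v k * prodMat A x (jt hn k) := by
      intro x
      rw [← sum_psi hn v (fun y => prodMat A x y), Finset.mul_sum]
      refine Finset.sum_congr rfl fun y _ => ?_
      simp only [Epsi, star_mul', star_star]
      ring
    rw [Finset.sum_congr rfl fun x _ => hterm x]
    exact sum_psi_star hn v _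
  set d : ∀ α, Fin (n α) → ℝ := fun α i => (A α i i).re with hd
  have hpsd : ∀ α, (A α).PosSemidef := fun α => pureState_posSemidef (hA α)
  have hd0 : ∀ α i, 0 ≤ d α i := fun α i => psd_diag_nonneg (hpsd α) i
  have hd1 : ∀ α i, d α i ≤ 1 := fun α i => pureState_diag_le_one (hA α) i
  set t : Fin (n 0) → ℝ := fun j => ∏ α, Real.sqrt (d α (jt hn j α)) with ht
  have ht0 : ∀ j, 0 ≤ t j := fun j => Finset.prod_nonneg fun α _ => Real.sqrt_nonneg _
  have hprod : ∀ j k, ‖prodMat A (jt hn j) (jt hn k)‖ ≤ t j * t k := by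
    intro j k
    calc ‖prodMat A (jt hn j) (jt hn k)‖
        = ∏ α, ‖A α (jt hn j α) (jt hn k α)‖ := norm_prod _ _
      _ ≤ ∏ α, (Real.sqrt (d α (jt hn j α)) * Real.sqrt (d α (jt hn k α))) :=
          Finset.prod_le_prod (fun α _ => norm_nonneg _)
            (fun α _ => psd_entry_bound (hpsd α) _ _)
      _ = t j * t k := by rw [ht, ← Finset.prod_mul_distrib]
  have hsub : ∀ α, ∑ j, d α (jt hn j α) ≤ 1 := by
    intro α
    rw [show ∑ j, d α (jt hn j α)
        = ∑ i ∈ Finset.univ.image (Fin.castLE (hn (Fin.zero_le α))), d α i from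
      (Finset.sum_image (fun a _ b _ h => Fin.castLE_injective _ h)).symm]
    calc ∑ i ∈ Finset.univ.image (Fin.castLE (hn (Fin.zero_le α))), d α i
        ≤ ∑ i, d α i := Finset.sum_le_sum_of_subset_of_nonneg (Finset.subset_univ _)
          (fun i _ _ => hd0 α i)
      _ = 1 := pureState_diag_sum (hA α)
  have hsum_t : ∑ j, t j ≤ 1 := by
    have hle : ∀ j, t j ≤ Real.sqrt (d 0 (jt hn j 0)) * Real.sqrt (d 1 (jt hn j 1)) := by
      intro j
      have h01 : ({0, 1} : Finset (Fin (p+2))) ⊆ Finset.univ := Finset.subset_univ _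
      have hpair : ∏ α ∈ ({0,1} : Finset (Fin (p+2))), Real.sqrt (d α (jt hn j α))
          = Real.sqrt (d 0 (jt hn j 0)) * Real.sqrt (d 1 (jt hn j 1)) :=
        Finset.prod_pair Fin.zero_ne_one
      have hb : ∏ α ∈ Finset.univ \ ({0,1} : Finset (Fin (p+2))),
          Real.sqrt (d α (jt hn j α)) ≤ 1 :=
        Finset.prod_le_one (fun α _ => Real.sqrt_nonneg _)
          (fun α _ => Real.sqrt_le_one.mpr (hd1 α _))
      have hpos : (0:ℝ) ≤ ∏ α ∈ ({0,1} : Finset (Fin (p+2))), Real.sqrt (d α (jt hn j α)) :=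
        Finset.prod_nonneg fun α _ => Real.sqrt_nonneg _
      calc t j = (∏ α ∈ Finset.univ \ ({0,1} : Finset (Fin (p+2))),
              Real.sqrt (d α (jt hn j α))) *
            ∏ α ∈ ({0,1} : Finset (Fin (p+2))), Real.sqrt (d α (jt hn j α)) :=
            (Finset.prod_sdiff h01).symm
        _ ≤ 1 * ∏ α ∈ ({0,1} : Finset (Fin (p+2))), Real.sqrt (d α (jt hn j α)) :=
            mul_le_mul_of_nonneg_right hb hpos
        _ = Real.sqrt (d 0 (jt hn j 0)) * Real.sqrt (d 1 (jt hn j 1)) := by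
            rw [one_mul, hpair]
    calc ∑ j, t j ≤ ∑ j, Real.sqrt (d 0 (jt hn j 0)) * Real.sqrt (d 1 (jt hn j 1)) :=
        Finset.sum_le_sum fun j _ => hle j
      _ ≤ Real.sqrt (∑ j, d 0 (jt hn j 0)) * Real.sqrt (∑ j, d 1 (jt hn j 1)) :=
        Real.sum_sqrt_mul_sqrt_le _ (fun j => hd0 _ _) (fun j => hd0 _ _)
      _ ≤ 1 * 1 := mul_le_mul (Real.sqrt_le_one.mpr (hsub 0)) (Real.sqrt_le_one.mpr (hsub 1))
          (Real.sqrt_nonneg _) zero_le_one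
      _ = 1 := one_mul _
  set S : ℝ := ∑ j, ‖v j‖ * t j with hSdef
  have hS0 : 0 ≤ S := Finset.sum_nonneg fun j _ => mul_nonneg (norm_nonneg _) (ht0 j)
  have hbound : ‖frobInner (Epsi hn v) (prodMat A)‖ ≤ S ^ 2 := by
    rw [hEP]
    calc ‖∑ j, star (v j) * ∑ k, v k * prodMat A (jt hn j) (jt hn k)‖
        ≤ ∑ j, ‖v j‖ * ‖∑ k, v k * prodMat A (jt hn j) (jt hn k)‖ :=
          (norm_sum_le _ _).trans (le_of_eq (Finset.sum_congr rfl fun j _ => by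
            rw [norm_mul, norm_star]))
      _ ≤ ∑ j, ‖v j‖ * (∑ k, ‖v k‖ * (t j * t k)) := Finset.sum_le_sum fun j _ =>
          mul_le_mul_of_nonneg_left ((norm_sum_le _ _).trans
            (Finset.sum_le_sum fun k _ => by
              rw [norm_mul]
              exact mul_le_mul_of_nonneg_left (hprod j k) (norm_nonneg _)))
            (norm_nonneg _)
      _ = S ^ 2 := by
          rw [sq, hSdef, Finset.sum_mul_sum]
          refine Finset.sum_congr rfl fun j _ => ?_
          rw [Finset.mul_sum]
          exact Finset.sum_congr rfl fun k _ => by ring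
  have hS : S ≤ ‖v j₀‖ := by
    calc S ≤ ∑ j, ‖v j₀‖ * t j :=
        Finset.sum_le_sum fun j _ => mul_le_mul_of_nonneg_right (hj₀ j) (ht0 j)
      _ = ‖v j₀‖ * ∑ j, t j := (Finset.mul_sum _ _ _).symm
      _ ≤ ‖v j₀‖ * 1 := mul_le_mul_of_nonneg_left hsum_t (norm_nonneg _)
      _ = ‖v j₀‖ := mul_one _
  calc (frobInner (Epsi hn v) (prodMat A)).re
      ≤ ‖frobInner (Epsi hn v) (prodMat A)‖ := Complex.re_le_norm _
    _ ≤ S ^ 2 := hbound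
    _ ≤ ‖v j₀‖ ^ 2 := pow_le_pow_left₀ hS0 hS 2

/-! ### Bilinearity of the Frobenius inner product -/

section Bilin

variable {m : Type*} [Fintype m] [DecidableEq m]

lemma frobInner_sub_left (A B C : Matrix m m ℂ) :
    frobInner (A - B) C = frobInner A C - frobInner B C := by
  simp [frobInner, Matrix.conjTranspose_sub, Matrix.sub_mul]

lemma frobInner_sub_right (A B C : Matrix m m ℂ) :
    frobInner A (B - C) = frobInner A B - frobInner A C := by
  simp [frobInner, Matrix.mul_sub]

lemma frobInner_smul_left (c : ℂ) (A B : Matrix m m ℂ) :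
    frobInner (c • A) B = star c * frobInner A B := by
  simp [frobInner, Matrix.conjTranspose_smul, Matrix.smul_mul, Matrix.trace_smul,
    smul_eq_mul]

lemma frobInner_smul_right (c : ℂ) (A B : Matrix m m ℂ) :
    frobInner A (c • B) = c * frobInner A B := by
  simp [frobInner, Matrix.mul_smul, Matrix.trace_smul, smul_eq_mul]

lemma frobInner_one_left (A : Matrix m m ℂ) : frobInner 1 A = A.trace := by
  simp [frobInner]

lemma frobInner_one_right (A : Matrix m m ℂ) : frobInner A 1 = star A.trace := by
  simp [frobInner, Matrix.trace_conjTranspose]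

lemma frobInner_sum_right {ι : Type*} (s : Finset ι) (A : Matrix m m ℂ)
    (f : ι → Matrix m m ℂ) :
    frobInner A (∑ i ∈ s, f i) = ∑ i ∈ s, frobInner A (f i) := by
  simp [frobInner, Finset.mul_sum]

end Bilin

/-! ### Facts about `E_ψ` -/

lemma psi_norm_sum {p : ℕ} {n : Fin (p + 2) → ℕ} (hn : Monotone n) (v : Fin (n 0) → ℂ)
    (hv : ∑ j, ‖v j‖ ^ 2 = 1) :
    ∑ x, psiVec hn v x * star (psiVec hn v x) = 1 := by
  rw [sum_psi hn v (fun x => star (psiVec hn v x))]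
  have : ∀ j : Fin (n 0), v j * star (psiVec hn v (jt hn j)) = ((‖v j‖ ^ 2 : ℝ) : ℂ) := by
    intro j
    rw [psiVec_jt, show star (v j) = (starRingEnd ℂ) (v j) from rfl, Complex.mul_conj,
      Complex.normSq_eq_norm_sq]
  rw [Finset.sum_congr rfl fun j _ => this j, ← Complex.ofReal_sum, hv, Complex.ofReal_one]

lemma trace_Epsi {p : ℕ} {n : Fin (p + 2) → ℕ} (hn : Monotone n) (v : Fin (n 0) → ℂ)
    (hv : ∑ j, ‖v j‖ ^ 2 = 1) : (Epsi hn v).trace = 1 := by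
  rw [show (Epsi hn v).trace = ∑ x, psiVec hn v x * star (psiVec hn v x) from rfl]
  exact psi_norm_sum hn v hv

lemma frobInner_Epsi_self {p : ℕ} {n : Fin (p + 2) → ℕ} (hn : Monotone n)
    (v : Fin (n 0) → ℂ) (hv : ∑ j, ‖v j‖ ^ 2 = 1) :
    frobInner (Epsi hn v) (Epsi hn v) = 1 := by
  rw [frobInner_eq_sum]
  have hterm : ∀ x y, star (Epsi hn v x y) * Epsi hn v x y
      = (psiVec hn v x * star (psiVec hn v x)) * (psiVec hn v y * star (psiVec hn v y)) := by
    intro x y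
    simp only [Epsi, star_mul', star_star]
    ring
  calc ∑ x, ∑ y, star (Epsi hn v x y) * Epsi hn v x y
      = ∑ x, ∑ y, (psiVec hn v x * star (psiVec hn v x)) *
          (psiVec hn v y * star (psiVec hn v y)) :=
        Finset.sum_congr rfl fun x _ => Finset.sum_congr rfl fun y _ => hterm x y
    _ = (∑ x, psiVec hn v x * star (psiVec hn v x)) *
          (∑ y, psiVec hn v y * star (psiVec hn v y)) := (Finset.sum_mul_sum _ _ _ _).symm
    _ = 1 := by rw [psi_norm_sum hn v hv, mul_one]

/-! ### The main theorem -/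

/-- Assume moreover `|v j| < 1` for every `j`, and let
`|v j₀| = max_j |v j|`.  Every state `Q` with Frobenius distance
`‖Q - E_ψ‖ < (1 - |v j₀|²) ⬝ √(N/(N-1))`, where `N = ∏ α, n α`, is entangled. -/
theorem close_to_Epsi_entangled {p : ℕ} {n : Fin (p + 2) → ℕ}
    (hn : Monotone n) (hn₁ : 2 ≤ n 0)
    (v : Fin (n 0) → ℂ) (hv : ∑ j, ‖v j‖ ^ 2 = 1) (hv1 : ∀ j, ‖v j‖ < 1)
    (j₀ : Fin (n 0)) (hj₀ : ∀ j, ‖v j‖ ≤ ‖v j₀‖)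
    (Q : Matrix (∀ α, Fin (n α)) (∀ α, Fin (n α)) ℂ) (hQ : IsState Q)
    (hclose : frobNorm (Q - Epsi hn v) < (1 - ‖v j₀‖ ^ 2) *
      Real.sqrt (((∏ α, n α : ℕ) : ℝ) / (((∏ α, n α : ℕ) : ℝ) - 1))) :
    ¬ IsSeparableState Q := by
  rintro ⟨k, c, P, hc0, hc1, hP, hQeq⟩
  classical
  set E := Epsi hn v with hE
  set N : ℕ := ∏ α, n α with hNdef
  -- `N ≥ 2`
  have hNpos : 0 < N := Finset.prod_pos fun α _ => lt_of_lt_of_le (by norm_num)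
    (le_trans hn₁ (hn (Fin.zero_le α)))
  have hN2 : 2 ≤ N := le_trans hn₁ (Nat.le_of_dvd hNpos
    (Finset.dvd_prod_of_mem n (Finset.mem_univ 0)))
  have hNr2 : (2:ℝ) ≤ (N:ℝ) := by exact_mod_cast hN2
  have hNne : ((N:ℝ)) ≠ 0 := by positivity
  have hNcne : ((N:ℂ)) ≠ 0 := by
    simp only [Ne, Nat.cast_eq_zero]
    omega
  have hcard : (Fintype.card (∀ α, Fin (n α)) : ℂ) = (N : ℂ) := by
    rw [Fintype.card_pi]
    simp [hNdef]
  -- overlap bound for `Q`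
  set lam : ℝ := ‖v j₀‖ ^ 2 with hlam
  have hlam1 : lam < 1 := by
    rw [hlam]
    calc ‖v j₀‖ ^ 2 ≤ ‖v j₀‖ * 1 := by nlinarith [norm_nonneg (v j₀), hv1 j₀]
      _ < 1 := by nlinarith [hv1 j₀, norm_nonneg (v j₀)]
  have hEQ : (frobInner E Q).re ≤ lam := by
    rw [hQeq, frobInner_sum_right, Complex.re_sum]
    calc ∑ i, (frobInner E ((c i : ℂ) • P i)).re
        = ∑ i, c i * (frobInner E (P i)).re := by
          refine Finset.sum_congr rfl fun i _ => ?_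
          rw [frobInner_smul_right, Complex.re_ofReal_mul]
      _ ≤ ∑ i, c i * lam := Finset.sum_le_sum fun i _ => by
          obtain ⟨A, hA, hPA⟩ := hP i
          exact mul_le_mul_of_nonneg_left
            (by rw [hPA]; exact overlap_bound hn v j₀ hj₀ A hA) (hc0 i)
      _ = lam := by rw [← Finset.sum_mul, hc1, one_mul]
  -- inner products with `1` and `E`
  have hEE : frobInner E E = 1 := frobInner_Epsi_self hn v hv
  have htrE : E.trace = 1 := trace_Epsi hn v hv
  have h1E : frobInner 1 E = 1 := by rw [frobInner_one_left, htrE]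
  have hE1 : frobInner E 1 = 1 := by rw [frobInner_one_right, htrE]; simp
  have h1Q : frobInner 1 Q = 1 := by rw [frobInner_one_left, hQ.2]
  have h11 : frobInner (1 : Matrix (∀ α, Fin (n α)) (∀ α, Fin (n α)) ℂ) 1 = (N:ℂ) := by
    rw [frobInner_one_left, Matrix.trace_one, hcard]
  -- `F = E - N⁻¹ • 1`, `D = Q - E`
  set s : ℂ := ((N:ℂ))⁻¹ with hs
  have hstars : star s = s := by
    rw [hs]
    simp
  set F : Matrix (∀ α, Fin (n α)) (∀ α, Fin (n α)) ℂ := E - s • 1 with hF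
  set D : Matrix (∀ α, Fin (n α)) (∀ α, Fin (n α)) ℂ := Q - E with hD
  have hFD : frobInner F D = frobInner E Q - 1 := by
    rw [hF, hD, frobInner_sub_left, frobInner_sub_right, frobInner_sub_right,
      frobInner_smul_left, frobInner_smul_left, hstars, hEE, h1E, h1Q]
    ring
  have hFF : frobInner F F = 1 - s := by
    rw [hF, frobInner_sub_left, frobInner_sub_right, frobInner_sub_right,
      frobInner_smul_left, frobInner_smul_right, frobInner_smul_left,
      frobInner_smul_right, hstars, hEE, h1E, hE1, h11]
    rw [hs, inv_mul_cancel₀ hNcne]; ring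
  have hFFre : (frobInner F F).re = 1 - 1/(N:ℝ) := by
    rw [hFF, hs]
    rw [show ((N:ℂ))⁻¹ = ((((N:ℝ))⁻¹ : ℝ) : ℂ) by push_cast; ring]
    rw [show (1 : ℂ) - ((((N:ℝ))⁻¹ : ℝ) : ℂ) = (((1 - ((N:ℝ))⁻¹ : ℝ)) : ℂ) by push_cast; ring]
    rw [Complex.ofReal_re]
    ring
  have hFnorm : frobNorm F = Real.sqrt (1 - 1/(N:ℝ)) := by rw [frobNorm, hFFre]
  -- chain of inequalities
  have hFDre : (frobInner F D).re ≤ lam - 1 := by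
    rw [hFD]
    simp only [Complex.sub_re, Complex.one_re]
    linarith
  have hkey : 1 - lam ≤ frobNorm F * frobNorm D := by
    have h1 : -(frobInner F D).re ≤ ‖frobInner F D‖ := by
      have h2 := Complex.abs_re_le_norm (frobInner F D)
      have h3 := neg_abs_le (frobInner F D).re
      linarith
    calc 1 - lam ≤ -(frobInner F D).re := by linarith
      _ ≤ ‖frobInner F D‖ := h1
      _ ≤ frobNorm F * frobNorm D := frob_cs F D
  -- numerical contradiction
  have hfrac : 1 - 1/(N:ℝ) = ((N:ℝ) - 1)/(N:ℝ) := by field_simp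
  have hsqrt_pos : 0 < Real.sqrt (1 - 1/(N:ℝ)) := by
    apply Real.sqrt_pos.mpr
    rw [hfrac]
    apply div_pos <;> linarith
  have hN1 : (N:ℝ) - 1 ≠ 0 := by linarith
  have hmul : Real.sqrt (1 - 1/(N:ℝ)) * Real.sqrt ((N:ℝ)/((N:ℝ) - 1)) = 1 := by
    rw [hfrac, ← Real.sqrt_mul (div_nonneg (by linarith) (by linarith))]
    rw [show ((N:ℝ) - 1)/(N:ℝ) * ((N:ℝ)/((N:ℝ) - 1)) = 1 by
      field_simp [hN1]]
    exact Real.sqrt_one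
  have hlt : frobNorm F * frobNorm D < 1 - lam := by
    rw [hFnorm]
    calc Real.sqrt (1 - 1/(N:ℝ)) * frobNorm D
        < Real.sqrt (1 - 1/(N:ℝ)) * ((1 - lam) * Real.sqrt ((N:ℝ)/((N:ℝ) - 1))) := by
          apply mul_lt_mul_of_pos_left _ hsqrt_pos
          rw [hD, hlam]
          exact_mod_cast hclose
      _ = (1 - lam) * (Real.sqrt (1 - 1/(N:ℝ)) * Real.sqrt ((N:ℝ)/((N:ℝ) - 1))) := by ring
      _ = 1 - lam := by rw [hmul, mul_one]
  linarith
end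
end
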